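/- Discrete-time Caccioppoli inequality: there is a universal constant C such that for any ancient solution u : V × ℤ_{≤0} → ℝ of the discrete-time heat equation D_t u = Δu and any integer R ≥ s, R²·∑_{Q̃_R} Γ(u) + R⁴·∑_{Q̃_R} (D_t u)² ≤ C·∑_{Q̃_{9R}} u², where Q̃_r = B_r(x₀) × ([−r², 0] ∩ ℤ) and ∑_{Q̃_r} v = ∑_{t=−r²}^{0} ∑_{x∈B_r} v(x,t) m_x. -/

import Mathlib

open scoped BigOperators

open Finset

lemma clamp_lipschitz (a b : ℝ) : |max 0 (min 1 a) - max 0 (min 1 b)| ≤ |a - b| := by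
  have h1 : |max 0 (min 1 a) - max 0 (min 1 b)| ≤ |min 1 a - min 1 b| := by
    rw [max_comm 0 (min 1 a), max_comm 0 (min 1 b)]
    exact abs_max_sub_max_le_abs _ _ _
  have h2 : |min 1 a - min 1 b| ≤ max |(1:ℝ) - 1| |a - b| := abs_min_sub_min_le_max 1 a 1 b
  have h3 : max |(1:ℝ) - 1| |a - b| = |a - b| := by simp
  linarith [h1, h2.trans_eq h3]

lemma telescope_nat (g : ℤ → ℝ) : ∀ n : ℕ, ∑ t ∈ Finset.Icc (-(n:ℤ)) 0, (g (t-1) - g t) = g (-(n:ℤ)-1) - g 0 := by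
  intro n
  induction n with
  | zero => simp
  | succ k ih =>
      have hins : Finset.Icc (-((k:ℤ)+1)) 0 = insert (-((k:ℤ)+1)) (Finset.Icc (-(k:ℤ)) 0) := by
        ext t; simp only [Finset.mem_Icc, Finset.mem_insert]; omega
      have hnm : (-((k:ℤ)+1)) ∉ Finset.Icc (-(k:ℤ)) 0 := by
        simp only [Finset.mem_Icc]; omega
      push_cast
      rw [hins, Finset.sum_insert hnm, ih]
      have e1 : (-((k:ℤ)+1) - 1) = (-(k:ℤ)-1) - 1 := by ring
      have e2 : (-((k:ℤ)+1)) = (-(k:ℤ)-1) := by ring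
      rw [e1, e2]
      ring

lemma telescope (g : ℤ → ℝ) (t₁ : ℤ) (h : t₁ ≤ 0) :
    ∑ t ∈ Finset.Icc t₁ 0, (g (t-1) - g t) = g (t₁-1) - g 0 := by
  obtain ⟨n, rfl⟩ : ∃ n : ℕ, t₁ = -(n:ℤ) := ⟨(-t₁).toNat, by omega⟩
  exact telescope_nat g n

lemma young_aux (Rv p a d q : ℝ) (hR : 0 < Rv) (hd : d^2*Rv^2 ≤ q) :
    -(a*p*d) ≤ 1/2*q*p^2 + a^2/(2*Rv^2) := by
  have hRne : Rv ≠ 0 := ne_of_gt hR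
  have key : -(((a/Rv)*Rv)*p*d) ≤ 1/2*q*p^2 + (a/Rv)^2/2 := by
    nlinarith [sq_nonneg (p*d*Rv + a/Rv), mul_nonneg (sq_nonneg p) (sub_nonneg.2 hd)]
  calc -(a*p*d) = -(((a/Rv)*Rv)*p*d) := by rw [div_mul_cancel₀ a hRne]
    _ ≤ 1/2*q*p^2 + (a/Rv)^2/2 := key
    _ = 1/2*q*p^2 + a^2/(2*Rv^2) := by rw [div_pow]; ring

lemma sum_shift (g : ℤ → ℝ) (a b : ℤ) :
    ∑ t ∈ Finset.Icc a b, g (t - 1) = ∑ t ∈ Finset.Icc (a-1) (b-1), g t := by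
  have : Finset.Icc (a-1) (b-1) = (Finset.Icc a b).map (addRightEmbedding (-1)) := by
    rw [Finset.map_add_right_Icc]; congr 1 <;> ring
  rw [this, Finset.sum_map]
  apply Finset.sum_congr rfl
  intro t _
  simp [addRightEmbedding, sub_eq_add_neg]


set_option maxHeartbeats 4000000 in
theorem main_cacc {V : Type} (w : V → V → ℝ) (m : V → ℝ) (ρ : V → V → ℝ) (x₀ : V) (s : ℝ)
    (hw_symm : ∀ x y, w x y = w y x) (hw_nonneg : ∀ x y, 0 ≤ w x y)
    (hw_fin : ∀ x, {y | w x y ≠ 0}.Finite) (hm : ∀ x, 0 < m x)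
    (hρ_symm : ∀ x y, ρ x y = ρ y x) (hρ_nonneg : ∀ x y, 0 ≤ ρ x y)
    (hρ_tri : ∀ x y z, ρ x z ≤ ρ x y + ρ y z)
    (hρw : ∀ x, ∑ᶠ y : V, w x y * ρ x y ^ 2 ≤ m x)
    (hball : ∀ (x : V) (r : ℝ), {y | ρ y x ≤ r}.Finite)
    (hjump : ∀ x y, w x y ≠ 0 → ρ x y ≤ s)
    (u : V → ℤ → ℝ)
    (hu : ∀ (x : V) (t : ℤ), t ≤ 0 →
      u x t - u x (t - 1) = (∑ᶠ y : V, w x y * (u y t - u x t)) / m x)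
    (R : ℕ) (hsR : s ≤ (R : ℝ)) (hR : 1 ≤ R) :
    (R : ℝ) ^ 2 * (∑ t ∈ Finset.Icc (-(R : ℤ) ^ 2) 0,
        ∑ x ∈ (hball x₀ (R : ℝ)).toFinset,
          ((1 / (2 * m x)) * ∑ᶠ y : V, w x y * (u y t - u x t) ^ 2) * m x)
    + (R : ℝ) ^ 4 * (∑ t ∈ Finset.Icc (-(R : ℤ) ^ 2) 0,
        ∑ x ∈ (hball x₀ (R : ℝ)).toFinset, (u x t - u x (t - 1)) ^ 2 * m x)
    ≤ 100 * ∑ t ∈ Finset.Icc (-(9 * (R : ℤ)) ^ 2) 0,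
        ∑ x ∈ (hball x₀ (9 * (R : ℝ))).toFinset, (u x t) ^ 2 * m x := by
  classical
  have hRr : (1:ℝ) ≤ (R:ℝ) := by exact_mod_cast hR
  have hRpos : (0:ℝ) < (R:ℝ) := by linarith
  set S : Finset V := (hball x₀ (9*(R:ℝ))).toFinset with hSdef
  have hmemB : ∀ (r : ℝ) (x : V), x ∈ (hball x₀ r).toFinset ↔ ρ x x₀ ≤ r := by
    intro r x; rw [Set.Finite.mem_toFinset]; rfl
  have hmemN : ∀ x y : V, y ∈ (hw_fin x).toFinset ↔ w x y ≠ 0 := by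
    intro x y; rw [Set.Finite.mem_toFinset]; rfl
  have hBmono : ∀ r r' : ℝ, r ≤ r' → (hball x₀ r).toFinset ⊆ (hball x₀ r').toFinset := by
    intro r r' hrr x hx
    exact (hmemB r' x).2 (le_trans ((hmemB r x).1 hx) hrr)
  -- membership in S
  have hmemS : ∀ x : V, x ∈ S ↔ ρ x x₀ ≤ 9*(R:ℝ) := fun x => hmemB _ x
  -- neighbors of points within 8R lie in S
  have hnbrS : ∀ x y : V, ρ x x₀ ≤ 8*(R:ℝ) → w x y ≠ 0 → y ∈ S := by
    intro x y hx hwxy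
    rw [hmemS]
    have h1 : ρ x y ≤ s := hjump x y hwxy
    have h2 : ρ y x₀ ≤ ρ y x + ρ x x₀ := hρ_tri y x x₀
    rw [hρ_symm y x] at h2
    linarith
  -- extension of neighbor sums to S
  have hext : ∀ (g : V → ℝ) (x : V), ρ x x₀ ≤ 8*(R:ℝ) →
      ∑ y ∈ (hw_fin x).toFinset, w x y * g y = ∑ y ∈ S, w x y * g y := by
    intro g x hx
    apply Finset.sum_subset
    · intro y hy
      exact hnbrS x y hx ((hmemN x y).1 hy)
    · intro y _ hyN
      have : w x y = 0 := by
        by_contra h; exact hyN ((hmemN x y).2 h)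
      simp [this]
  -- subsums of nonneg neighbor-type sums
  have hsum_le : ∀ (x : V) (T : Finset V) (h : V → ℝ), (∀ y, 0 ≤ h y) →
      ∑ y ∈ T, w x y * h y ≤ ∑ y ∈ (hw_fin x).toFinset, w x y * h y := by
    intro x T h hh
    calc ∑ y ∈ T, w x y * h y
        ≤ ∑ y ∈ T ∪ (hw_fin x).toFinset, w x y * h y := by
          apply Finset.sum_le_sum_of_subset_of_nonneg Finset.subset_union_left
          intro y _ _; exact mul_nonneg (hw_nonneg x y) (hh y)
      _ = ∑ y ∈ (hw_fin x).toFinset, w x y * h y := by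
          apply (Finset.sum_subset Finset.subset_union_right ?_).symm
          intro y _ hyN
          have : w x y = 0 := by by_contra h'; exact hyN ((hmemN x y).2 h')
          simp [this]
  -- mass bound
  have hmass : ∀ (x : V) (T : Finset V), (∑ y ∈ T, w x y * ρ x y ^2) ≤ m x := by
    intro x T
    have h0 : ∑ᶠ y, w x y * ρ x y^2 = ∑ y ∈ (hw_fin x).toFinset, w x y * ρ x y ^2 := by
      apply finsum_eq_sum_of_support_subset
      intro y hy
      rw [Function.mem_support] at hy
      rw [Set.Finite.coe_toFinset]
      simp only [Set.mem_setOf_eq]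
      intro h0
      exact hy (by rw [h0]; ring)
    calc ∑ y ∈ T, w x y * ρ x y ^2 ≤ ∑ y ∈ (hw_fin x).toFinset, w x y * ρ x y ^2 :=
          hsum_le x T _ (fun y => sq_nonneg _)
      _ ≤ m x := by rw [← h0]; exact hρw x
  -- heat equation, summed form
  have heat : ∀ (x : V) (t : ℤ), t ≤ 0 →
      (u x t - u x (t-1)) * m x = ∑ y ∈ (hw_fin x).toFinset, w x y * (u y t - u x t) := by
    intro x t ht
    have h0 : ∑ᶠ y, w x y * (u y t - u x t) = ∑ y ∈ (hw_fin x).toFinset, w x y * (u y t - u x t) := by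
      apply finsum_eq_sum_of_support_subset
      intro y hy
      rw [Function.mem_support] at hy
      rw [Set.Finite.coe_toFinset]
      simp only [Set.mem_setOf_eq]
      intro h0
      exact hy (by rw [h0]; ring)
    rw [hu x t ht, h0, div_mul_cancel₀]
    exact ne_of_gt (hm x)
  -- cutoff functions
  have hcut : ∀ k : ℝ, 0 ≤ k → ∃ φ : V → ℝ, (∀ x, 0 ≤ φ x) ∧ (∀ x, φ x ≤ 1) ∧
      (∀ x, ρ x x₀ ≤ k*(R:ℝ) → φ x = 1) ∧ (∀ x, φ x ≠ 0 → ρ x x₀ ≤ (k+1)*(R:ℝ)) ∧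
      (∀ x y, |φ x - φ y| ≤ ρ x y / (R:ℝ)) := by
    intro k hk
    refine ⟨fun x => max 0 (min 1 (k+1 - ρ x x₀ / (R:ℝ))), fun x => le_max_left _ _, ?_, ?_, ?_, ?_⟩
    · intro x
      exact max_le (by norm_num) (min_le_left _ _)
    · intro x hx
      have h1 : ρ x x₀ / (R:ℝ) ≤ k := (div_le_iff₀ hRpos).2 (by linarith)
      have h2 : (1:ℝ) ≤ k+1 - ρ x x₀/(R:ℝ) := by linarith
      simp only [min_eq_left h2]
      exact max_eq_right (by norm_num)
    · intro x hx
      by_contra hgt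
      push_neg at hgt
      apply hx
      have h2 : k+1 - ρ x x₀/(R:ℝ) ≤ 0 := by
        have : (k+1) ≤ ρ x x₀ / (R:ℝ) := (le_div_iff₀ hRpos).2 (by linarith)
        linarith
      have h3 : min 1 (k+1 - ρ x x₀/(R:ℝ)) ≤ 0 := le_trans (min_le_right _ _) h2
      simp only []
      exact max_eq_left h3
    · intro x y
      have h1 := clamp_lipschitz (k+1 - ρ x x₀/(R:ℝ)) (k+1 - ρ y x₀/(R:ℝ))
      have h2 : (k+1 - ρ x x₀/(R:ℝ)) - (k+1 - ρ y x₀/(R:ℝ)) = (ρ y x₀ - ρ x x₀)/(R:ℝ) := by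
        ring
      rw [h2] at h1
      have h3 : |(ρ y x₀ - ρ x x₀)/(R:ℝ)| = |ρ y x₀ - ρ x x₀| / (R:ℝ) := by
        rw [abs_div, abs_of_pos hRpos]
      have h4 : |ρ y x₀ - ρ x x₀| ≤ ρ x y := by
        rw [abs_sub_le_iff]
        constructor
        · have := hρ_tri y x x₀
          rw [hρ_symm y x] at this
          linarith
        · have := hρ_tri x y x₀
          linarith
      calc |(fun x => max 0 (min 1 (k+1 - ρ x x₀ / (R:ℝ)))) x - (fun x => max 0 (min 1 (k+1 - ρ x x₀ / (R:ℝ)))) y|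
          ≤ |(ρ y x₀ - ρ x x₀)/(R:ℝ)| := h1
        _ = |ρ y x₀ - ρ x x₀| / (R:ℝ) := h3
        _ ≤ ρ x y / (R:ℝ) := by gcongr
  -- generic swap of double sums
  have hswap : ∀ h : V → V → ℝ, ∑ x ∈ S, ∑ y ∈ S, w x y * h x y
      = ∑ x ∈ S, ∑ y ∈ S, w x y * h y x := by
    intro h
    rw [Finset.sum_comm]
    apply Finset.sum_congr rfl; intro c _
    apply Finset.sum_congr rfl; intro d _
    rw [hw_symm]
  -- energy density (times measure)
  set Em : V → ℤ → ℝ := fun x t => ∑ y ∈ (hw_fin x).toFinset, w x y * (u y t - u x t)^2 with hEmdef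
  have hEm_nonneg : ∀ x t, 0 ≤ Em x t := by
    intro x t
    apply Finset.sum_nonneg
    intro y _
    exact mul_nonneg (hw_nonneg x y) (sq_nonneg _)
  have hEmS : ∀ (x : V) (t : ℤ), ρ x x₀ ≤ 8*(R:ℝ) →
      Em x t = ∑ y ∈ S, w x y * (u y t - u x t)^2 := by
    intro x t hx
    exact hext (fun y => (u y t - u x t)^2) x hx
  -- squared lipschitz bound for cutoffs
  have hlip2 : ∀ (φ : V → ℝ), (∀ x y, |φ x - φ y| ≤ ρ x y / (R:ℝ)) →
      ∀ x y, (φ x - φ y)^2 ≤ ρ x y^2 / (R:ℝ)^2 := by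
    intro φ hl x y
    have h1 := hl x y
    have h2 := abs_le.1 (le_of_eq (rfl : |φ x - φ y| = |φ x - φ y|))
    have h3 : -(ρ x y / (R:ℝ)) ≤ φ x - φ y ∧ φ x - φ y ≤ ρ x y / (R:ℝ) := by
      constructor
      · linarith [neg_abs_le (φ x - φ y)]
      · linarith [le_abs_self (φ x - φ y)]
    have h4 : (φ x - φ y)^2 ≤ (ρ x y / (R:ℝ))^2 := sq_le_sq' h3.1 h3.2
    rwa [div_pow] at h4
  -- Lemma A : spatial Caccioppoli
  have lemA : ∀ φ : V → ℝ, (∀ x, 0 ≤ φ x) → (∀ x, φ x ≤ 1) →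
      (∀ x, φ x ≠ 0 → ρ x x₀ ≤ 4*(R:ℝ)) → (∀ x y, |φ x - φ y| ≤ ρ x y / (R:ℝ)) →
      ∀ t₁ : ℤ, t₁ ≤ 0 →
      ∑ t ∈ Finset.Icc t₁ 0, ∑ x ∈ S, φ x^2 * Em x t ≤
        4 * (∑ x ∈ S, φ x^2 * (u x (t₁-1))^2 * m x)
        + (8/(R:ℝ)^2) * ∑ t ∈ Finset.Icc t₁ 0, ∑ x ∈ S, (u x t)^2 * m x := by
    intro φ hφ0 hφ1 hφsupp hφlip t₁ ht₁
    have hφ8 : ∀ x : V, φ x ≠ 0 → ρ x x₀ ≤ 8*(R:ℝ) := by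
      intro x hx; linarith [hφsupp x hx]
    -- single time step estimate
    have step : ∀ t : ℤ, t ≤ 0 →
        ∑ x ∈ S, φ x^2 * Em x t ≤
          4*(∑ x ∈ S, φ x^2*((u x (t-1))^2 - (u x t)^2)*m x)
          + (8/(R:ℝ)^2) * ∑ x ∈ S, (u x t)^2*m x := by
      intro t ht
      -- P = Q (heat equation tested with φ² u)
      have hPQ : ∑ x ∈ S, φ x^2 * u x t * ((u x t - u x (t-1)) * m x)
          = ∑ x ∈ S, ∑ y ∈ S, w x y * (φ x^2 * u x t * (u y t - u x t)) := by
        apply Finset.sum_congr rfl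
        intro x _
        by_cases hφx : φ x = 0
        · simp [hφx]
        · rw [heat x t ht, hext (fun y => u y t - u x t) x (hφ8 x hφx), Finset.mul_sum]
          apply Finset.sum_congr rfl
          intro y _
          ring
      -- symmetrization identity : T = -2 Q
      have hT : ∑ x ∈ S, ∑ y ∈ S, w x y *
            ((1/2*(φ y^2+φ x^2))*(u y t - u x t)^2
              + 1/2*(u y t + u x t)*(φ y^2-φ x^2)*(u y t - u x t))
          = -2 * ∑ x ∈ S, ∑ y ∈ S, w x y * (φ x^2 * u x t * (u y t - u x t)) := by
        have h1 := hswap (fun x y => φ x^2 * u x t * (u y t - u x t))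
        have h2 : ∑ x ∈ S, ∑ y ∈ S, w x y *
              ((1/2*(φ y^2+φ x^2))*(u y t - u x t)^2
                + 1/2*(u y t + u x t)*(φ y^2-φ x^2)*(u y t - u x t))
            = ∑ x ∈ S, ∑ y ∈ S,
              (-(w x y * (φ x^2 * u x t * (u y t - u x t)))
               - w x y * (φ y^2 * u y t * (u x t - u y t))) := by
          apply Finset.sum_congr rfl; intro x _
          apply Finset.sum_congr rfl; intro y _
          ring
        rw [h2]
        rw [Finset.sum_congr rfl (fun x _ => Finset.sum_sub_distrib _ _)]
        rw [Finset.sum_sub_distrib, Finset.sum_congr rfl (fun x _ => Finset.sum_neg_distrib _), Finset.sum_neg_distrib]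
        rw [← h1]
        ring
      -- per-pair Young inequality, summed
      have hYoung : ∑ x ∈ S, ∑ y ∈ S, w x y * (1/4 * φ x^2 * (u y t - u x t)^2)
          ≤ (∑ x ∈ S, ∑ y ∈ S, w x y *
              ((1/2*(φ y^2+φ x^2))*(u y t - u x t)^2
                + 1/2*(u y t + u x t)*(φ y^2-φ x^2)*(u y t - u x t)))
            + ∑ x ∈ S, ∑ y ∈ S, w x y * (((u y t)^2 + (u x t)^2) * ρ x y^2/(R:ℝ)^2) := by
        rw [← Finset.sum_add_distrib]
        apply Finset.sum_le_sum
        intro x _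
        rw [← Finset.sum_add_distrib]
        apply Finset.sum_le_sum
        intro y _
        rw [← mul_add]
        apply mul_le_mul_of_nonneg_left _ (hw_nonneg x y)
        have hB2 : (φ y - φ x)^2 ≤ ρ x y^2 / (R:ℝ)^2 := by
          have := hlip2 φ hφlip y x
          rwa [hρ_symm y x] at this
        have h1 : -(1/2*(u y t + u x t)*(φ y^2-φ x^2)*(u y t - u x t))
            ≤ 1/4*(φ y^2+φ x^2)*(u y t - u x t)^2 + ((u y t)^2+(u x t)^2)*(φ y - φ x)^2 := by
          nlinarith [sq_nonneg ((φ y + φ x)*(u y t - u x t) + 2*(u y t + u x t)*(φ y - φ x)),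
            sq_nonneg ((φ y - φ x)*(u y t - u x t)),
            mul_nonneg (sq_nonneg (u y t - u x t)) (sq_nonneg (φ y - φ x))]
        have h2 : ((u y t)^2+(u x t)^2)*(φ y - φ x)^2
            ≤ ((u y t)^2+(u x t)^2)*ρ x y^2/(R:ℝ)^2 := by
          have h2' := mul_le_mul_of_nonneg_left hB2
            (by positivity : (0:ℝ) ≤ (u y t)^2+(u x t)^2)
          calc ((u y t)^2+(u x t)^2)*(φ y - φ x)^2
              ≤ ((u y t)^2+(u x t)^2)*(ρ x y^2/(R:ℝ)^2) := h2'
            _ = ((u y t)^2+(u x t)^2)*ρ x y^2/(R:ℝ)^2 := by ring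
        have h3 : (0:ℝ) ≤ φ y^2 * (u y t - u x t)^2 :=
          mul_nonneg (sq_nonneg _) (sq_nonneg _)
        linarith [h1, h2, h3]
      -- left side of Young equals the energy
      have hA : ∑ x ∈ S, φ x^2 * Em x t
          = 4 * ∑ x ∈ S, ∑ y ∈ S, w x y * (1/4 * φ x^2 * (u y t - u x t)^2) := by
        rw [Finset.mul_sum]
        apply Finset.sum_congr rfl
        intro x _
        by_cases hφx : φ x = 0
        · simp [hφx]
        · rw [hEmS x t (hφ8 x hφx), Finset.mul_sum, Finset.mul_sum]
          apply Finset.sum_congr rfl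
          intro y _
          ring
      -- error term bound
      have hErr : ∑ x ∈ S, ∑ y ∈ S, w x y * (((u y t)^2 + (u x t)^2) * ρ x y^2/(R:ℝ)^2)
          ≤ (2/(R:ℝ)^2) * ∑ x ∈ S, (u x t)^2 * m x := by
        have hsplit : ∑ x ∈ S, ∑ y ∈ S, w x y * (((u y t)^2 + (u x t)^2) * ρ x y^2/(R:ℝ)^2)
            = (∑ x ∈ S, ∑ y ∈ S, w x y * ((u y t)^2 * ρ x y^2/(R:ℝ)^2))
              + ∑ x ∈ S, ∑ y ∈ S, w x y * ((u x t)^2 * ρ x y^2/(R:ℝ)^2) := by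
          rw [← Finset.sum_add_distrib]
          apply Finset.sum_congr rfl; intro x _
          rw [← Finset.sum_add_distrib]
          apply Finset.sum_congr rfl; intro y _
          ring
        have hsw : ∑ x ∈ S, ∑ y ∈ S, w x y * ((u y t)^2 * ρ x y^2/(R:ℝ)^2)
            = ∑ x ∈ S, ∑ y ∈ S, w x y * ((u x t)^2 * ρ x y^2/(R:ℝ)^2) := by
          rw [hswap (fun x y => (u y t)^2 * ρ x y^2/(R:ℝ)^2)]
          apply Finset.sum_congr rfl; intro x _
          apply Finset.sum_congr rfl; intro y _
          rw [hρ_symm y x]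
        have hone : ∀ x : V, ∑ y ∈ S, w x y * ((u x t)^2 * ρ x y^2/(R:ℝ)^2)
            ≤ (1/(R:ℝ)^2) * ((u x t)^2 * m x) := by
          intro x
          have h1 : ∑ y ∈ S, w x y * ((u x t)^2 * ρ x y^2/(R:ℝ)^2)
              = ((u x t)^2/(R:ℝ)^2) * ∑ y ∈ S, w x y * ρ x y^2 := by
            rw [Finset.mul_sum]
            apply Finset.sum_congr rfl; intro y _; ring
          rw [h1]
          have h2 : ∑ y ∈ S, w x y * ρ x y^2 ≤ m x := hmass x S
          have h3 : (0:ℝ) ≤ (u x t)^2/(R:ℝ)^2 := by positivity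
          calc ((u x t)^2/(R:ℝ)^2) * ∑ y ∈ S, w x y * ρ x y^2
              ≤ ((u x t)^2/(R:ℝ)^2) * m x := by
                apply mul_le_mul_of_nonneg_left h2 h3
            _ = (1/(R:ℝ)^2) * ((u x t)^2 * m x) := by ring
        calc ∑ x ∈ S, ∑ y ∈ S, w x y * (((u y t)^2 + (u x t)^2) * ρ x y^2/(R:ℝ)^2)
            = 2 * ∑ x ∈ S, ∑ y ∈ S, w x y * ((u x t)^2 * ρ x y^2/(R:ℝ)^2) := by
              rw [hsplit, hsw]; ring
          _ ≤ 2 * ∑ x ∈ S, (1/(R:ℝ)^2) * ((u x t)^2 * m x) := by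
              have := Finset.sum_le_sum (fun x (_ : x ∈ S) => hone x)
              linarith
          _ = (2/(R:ℝ)^2) * ∑ x ∈ S, (u x t)^2 * m x := by
              rw [Finset.mul_sum, Finset.mul_sum]
              apply Finset.sum_congr rfl; intro x _; ring
      -- lower bound for -2P
      have hP : -2 * ∑ x ∈ S, φ x^2 * u x t * ((u x t - u x (t-1)) * m x)
          ≤ ∑ x ∈ S, φ x^2*((u x (t-1))^2 - (u x t)^2)*m x := by
        have : ∀ x ∈ S, -2 * (φ x^2 * u x t * ((u x t - u x (t-1)) * m x))
            ≤ φ x^2*((u x (t-1))^2 - (u x t)^2)*m x := by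
          intro x _
          nlinarith [mul_nonneg (mul_nonneg (sq_nonneg (φ x)) (sq_nonneg (u x t - u x (t-1)))) (le_of_lt (hm x))]
        calc -2 * ∑ x ∈ S, φ x^2 * u x t * ((u x t - u x (t-1)) * m x)
            = ∑ x ∈ S, -2 * (φ x^2 * u x t * ((u x t - u x (t-1)) * m x)) := by
              rw [Finset.mul_sum]
          _ ≤ ∑ x ∈ S, φ x^2*((u x (t-1))^2 - (u x t)^2)*m x :=
              Finset.sum_le_sum this
      -- combine
      have hcomb := hYoung
      rw [hT] at hcomb
      rw [← hPQ] at hcomb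
      -- hcomb : ∑∑ w (1/4 φ² a²) ≤ -2 P + Err
      have hAle : ∑ x ∈ S, φ x^2 * Em x t
          ≤ 4 * (-2 * ∑ x ∈ S, φ x^2 * u x t * ((u x t - u x (t-1)) * m x))
            + 4 * ∑ x ∈ S, ∑ y ∈ S, w x y * (((u y t)^2 + (u x t)^2) * ρ x y^2/(R:ℝ)^2) := by
        rw [hA]; linarith
      calc ∑ x ∈ S, φ x^2 * Em x t
          ≤ 4 * (-2 * ∑ x ∈ S, φ x^2 * u x t * ((u x t - u x (t-1)) * m x))
            + 4 * ∑ x ∈ S, ∑ y ∈ S, w x y * (((u y t)^2 + (u x t)^2) * ρ x y^2/(R:ℝ)^2) := hAle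
        _ ≤ 4*(∑ x ∈ S, φ x^2*((u x (t-1))^2 - (u x t)^2)*m x)
            + 4 * ((2/(R:ℝ)^2) * ∑ x ∈ S, (u x t)^2 * m x) := by
            have h4 : 4 * (-2 * ∑ x ∈ S, φ x^2 * u x t * ((u x t - u x (t-1)) * m x))
                ≤ 4*(∑ x ∈ S, φ x^2*((u x (t-1))^2 - (u x t)^2)*m x) := by linarith
            have h5 := hErr
            linarith
        _ = 4*(∑ x ∈ S, φ x^2*((u x (t-1))^2 - (u x t)^2)*m x)
            + (8/(R:ℝ)^2) * ∑ x ∈ S, (u x t)^2*m x := by ring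
    -- sum over time and telescope
    have hGnn : ∀ τ : ℤ, 0 ≤ ∑ x ∈ S, φ x^2 * (u x τ)^2 * m x := by
      intro τ
      apply Finset.sum_nonneg
      intro x _
      have := (hm x).le
      positivity
    have htel : ∑ t ∈ Finset.Icc t₁ 0, (∑ x ∈ S, φ x^2*((u x (t-1))^2 - (u x t)^2)*m x)
        ≤ ∑ x ∈ S, φ x^2 * (u x (t₁-1))^2 * m x := by
      have heq : ∀ t : ℤ, ∑ x ∈ S, φ x^2*((u x (t-1))^2 - (u x t)^2)*m x
          = (fun τ => ∑ x ∈ S, φ x^2 * (u x τ)^2 * m x) (t-1)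
            - (fun τ => ∑ x ∈ S, φ x^2 * (u x τ)^2 * m x) t := by
        intro t
        simp only []
        rw [← Finset.sum_sub_distrib]
        apply Finset.sum_congr rfl; intro x _; ring
      rw [Finset.sum_congr rfl (fun t _ => heq t)]
      rw [telescope (fun τ => ∑ x ∈ S, φ x^2 * (u x τ)^2 * m x) t₁ ht₁]
      linarith [hGnn 0]
    calc ∑ t ∈ Finset.Icc t₁ 0, ∑ x ∈ S, φ x^2 * Em x t
        ≤ ∑ t ∈ Finset.Icc t₁ 0,
            (4*(∑ x ∈ S, φ x^2*((u x (t-1))^2 - (u x t)^2)*m x)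
              + (8/(R:ℝ)^2) * ∑ x ∈ S, (u x t)^2*m x) := by
          apply Finset.sum_le_sum
          intro t ht
          exact step t (Finset.mem_Icc.1 ht).2
      _ = 4*(∑ t ∈ Finset.Icc t₁ 0, ∑ x ∈ S, φ x^2*((u x (t-1))^2 - (u x t)^2)*m x)
          + (8/(R:ℝ)^2) * ∑ t ∈ Finset.Icc t₁ 0, ∑ x ∈ S, (u x t)^2*m x := by
          rw [Finset.sum_add_distrib, Finset.mul_sum, Finset.mul_sum]
      _ ≤ 4 * (∑ x ∈ S, φ x^2 * (u x (t₁-1))^2 * m x)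
          + (8/(R:ℝ)^2) * ∑ t ∈ Finset.Icc t₁ 0, ∑ x ∈ S, (u x t)^2 * m x := by
          have h4 := mul_le_mul_of_nonneg_left htel (by norm_num : (0:ℝ) ≤ 4)
          linarith [h4]
  -- ball of radius 2R and its indicator
  set B2 : Finset V := (hball x₀ (2*(R:ℝ))).toFinset with hB2def
  set χ : V → ℝ := fun z => if ρ z x₀ ≤ 2*(R:ℝ) then (1:ℝ) else 0 with hχdef
  have hχ01 : ∀ z, 0 ≤ χ z ∧ χ z ≤ 1 := by
    intro z; constructor <;> · simp only [hχdef]; split <;> norm_num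
  have hχEm : ∀ (c : ℝ) (t : ℤ), 0 ≤ c → ∑ x ∈ S, c * (χ x * Em x t) = c * ∑ x ∈ B2, Em x t := by
    intro c t hc
    have h1 : ∑ x ∈ S, c * (χ x * Em x t) = ∑ x ∈ S, (if ρ x x₀ ≤ 2*(R:ℝ) then c * Em x t else 0) := by
      apply Finset.sum_congr rfl; intro x _
      simp only [hχdef]
      split <;> ring
    rw [h1, ← Finset.sum_filter]
    have h2 : S.filter (fun x => ρ x x₀ ≤ 2*(R:ℝ)) = B2 := by
      ext z
      simp only [Finset.mem_filter]
      constructor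
      · rintro ⟨_, hz⟩; exact (hmemB _ z).2 hz
      · intro hz
        have hz' := (hmemB _ z).1 hz
        exact ⟨(hmemS z).2 (by linarith), hz'⟩
    rw [h2, Finset.mul_sum]
  -- Lemma B : Caccioppoli for time differences
  have lemB : ∀ ψ : V → ℝ, (∀ x, 0 ≤ ψ x) → (∀ x, ψ x ≤ 1) →
      (∀ x, ψ x ≠ 0 → ρ x x₀ ≤ 2*(R:ℝ)) → (∀ x y, |ψ x - ψ y| ≤ ρ x y / (R:ℝ)) →
      ∀ t₂ : ℤ, t₂ ≤ 0 →
      ∑ t ∈ Finset.Icc t₂ 0, ∑ x ∈ S, ψ x^2 * (u x t - u x (t-1))^2 * m x ≤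
        (∑ x ∈ B2, Em x (t₂-1))
        + (1/(R:ℝ)^2) * ∑ t ∈ Finset.Icc t₂ 0, ∑ x ∈ B2, Em x t := by
    intro ψ hψ0 hψ1 hψsupp hψlip t₂ ht₂
    have hψ8 : ∀ x : V, ψ x ≠ 0 → ρ x x₀ ≤ 8*(R:ℝ) := by
      intro x hx; linarith [hψsupp x hx]
    have hψχ : ∀ x : V, ψ x ≤ χ x := by
      intro x
      by_cases hx : ψ x = 0
      · rw [hx]; exact (hχ01 x).1
      · simp only [hχdef, if_pos (hψsupp x hx)]; exact hψ1 x
    have hχψ : ∀ x : V, ψ x ≠ 0 → χ x = 1 := by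
      intro x hx; simp only [hχdef, if_pos (hψsupp x hx)]
    -- the pair energy
    obtain ⟨H, hHdef⟩ : ∃ H : ℤ → ℝ,
        ∀ τ, H τ = ∑ x ∈ S, ∑ y ∈ S, w x y * (ψ x * ψ y * (u y τ - u x τ)^2) :=
      ⟨_, fun τ => rfl⟩
    have hHnn : ∀ τ, 0 ≤ H τ := by
      intro τ
      rw [hHdef]
      apply Finset.sum_nonneg; intro x _
      apply Finset.sum_nonneg; intro y _
      exact mul_nonneg (hw_nonneg x y)
        (mul_nonneg (mul_nonneg (hψ0 x) (hψ0 y)) (sq_nonneg _))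
    have hHEm : ∀ τ : ℤ, H τ ≤ ∑ x ∈ B2, Em x τ := by
      intro τ
      have h1 : H τ ≤ ∑ x ∈ S, (1:ℝ) * (χ x * Em x τ) := by
        rw [hHdef]
        apply Finset.sum_le_sum
        intro x _
        by_cases hx : ψ x = 0
        · rw [one_mul]
          have : ∑ y ∈ S, w x y * (ψ x * ψ y * (u y τ - u x τ)^2) = 0 := by
            apply Finset.sum_eq_zero; intro y _; rw [hx]; ring
          rw [this]
          exact mul_nonneg (hχ01 x).1 (hEm_nonneg x τ)
        · have hle : ∑ y ∈ S, w x y * (ψ x * ψ y * (u y τ - u x τ)^2)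
              ≤ ∑ y ∈ S, w x y * (u y τ - u x τ)^2 := by
            apply Finset.sum_le_sum
            intro y _
            apply mul_le_mul_of_nonneg_left _ (hw_nonneg x y)
            have h2 : ψ x * ψ y ≤ 1 :=
              mul_le_one₀ (hψ1 x) (hψ0 y) (hψ1 y)
            nlinarith [sq_nonneg (u y τ - u x τ), mul_nonneg (hψ0 x) (hψ0 y)]
          have hle2 : ∑ y ∈ S, w x y * (u y τ - u x τ)^2 ≤ Em x τ := by
            rw [hEmS x τ (hψ8 x hx)]
          rw [one_mul, hχψ x hx, one_mul]
          exact le_trans hle hle2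
      calc H τ ≤ ∑ x ∈ S, (1:ℝ) * (χ x * Em x τ) := h1
        _ = 1 * ∑ x ∈ B2, Em x τ := hχEm 1 τ (by norm_num)
        _ = ∑ x ∈ B2, Em x τ := by ring
    -- single time step
    have stepB : ∀ t : ℤ, t ≤ 0 →
        ∑ x ∈ S, ψ x^2 * (u x t - u x (t-1))^2 * m x ≤
          (1/2*H (t-1) - 1/2*H t) + (1/(R:ℝ)^2) * ∑ x ∈ B2, Em x t := by
      intro t ht
      -- tested equation
      have hPQ : ∑ x ∈ S, ψ x^2 * (u x t - u x (t-1)) * ((u x t - u x (t-1)) * m x)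
          = ∑ x ∈ S, ∑ y ∈ S, w x y * (ψ x^2 * (u x t - u x (t-1)) * (u y t - u x t)) := by
        apply Finset.sum_congr rfl
        intro x _
        by_cases hψx : ψ x = 0
        · simp [hψx]
        · rw [heat x t ht, hext (fun y => u y t - u x t) x (hψ8 x hψx), Finset.mul_sum]
          apply Finset.sum_congr rfl
          intro y _
          ring
      -- symmetrization
      have hT : ∑ x ∈ S, ∑ y ∈ S, w x y *
            ((u y t - u x t) * (ψ x^2*(u x t - u x (t-1)) - ψ y^2*(u y t - u y (t-1))))
          = 2 * ∑ x ∈ S, ∑ y ∈ S, w x y * (ψ x^2 * (u x t - u x (t-1)) * (u y t - u x t)) := by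
        have h1 := hswap (fun x y => ψ x^2 * (u x t - u x (t-1)) * (u y t - u x t))
        have h2 : ∑ x ∈ S, ∑ y ∈ S, w x y *
              ((u y t - u x t) * (ψ x^2*(u x t - u x (t-1)) - ψ y^2*(u y t - u y (t-1))))
            = ∑ x ∈ S, ∑ y ∈ S,
              (w x y * (ψ x^2 * (u x t - u x (t-1)) * (u y t - u x t))
                + w x y * (ψ y^2 * (u y t - u y (t-1)) * (u x t - u y t))) := by
          apply Finset.sum_congr rfl; intro x _
          apply Finset.sum_congr rfl; intro y _
          ring
        rw [h2]
        rw [Finset.sum_congr rfl (fun x _ => Finset.sum_add_distrib), Finset.sum_add_distrib]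
        rw [← h1]
        ring
      -- per-pair estimate
      have hpair : ∀ x ∈ S, ∀ y ∈ S, w x y *
            ((u y t - u x t) * (ψ x^2*(u x t - u x (t-1)) - ψ y^2*(u y t - u y (t-1))))
          ≤ w x y * (1/2*(ψ x*ψ y*((u y (t-1) - u x (t-1))^2 - (u y t - u x t)^2))
              + 1/2*ρ x y^2*(ψ x^2*(u x t - u x (t-1))^2)
              + 1/2*ρ x y^2*(ψ y^2*(u y t - u y (t-1))^2)
              + (χ x + χ y)*((u y t - u x t)^2/(2*(R:ℝ)^2))) := by
        intro x _ y _
        apply mul_le_mul_of_nonneg_left _ (hw_nonneg x y)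
        have hRR : (0:ℝ) < (R:ℝ)^2 := by positivity
        have hd2 : (ψ y - ψ x)^2 ≤ ρ x y^2 / (R:ℝ)^2 := by
          have := hlip2 ψ hψlip y x
          rwa [hρ_symm y x] at this
        have hd2' : (ψ y - ψ x)^2 * (R:ℝ)^2 ≤ ρ x y^2 := (le_div_iff₀ hRR).1 hd2
        -- part 0
        have p0 : (u y t - u x t) * (-(ψ x*ψ y)*((u y t - u x t) - (u y (t-1) - u x (t-1))))
            ≤ 1/2*(ψ x*ψ y*((u y (t-1) - u x (t-1))^2 - (u y t - u x t)^2)) := by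
          nlinarith [mul_nonneg (mul_nonneg (hψ0 x) (hψ0 y))
            (sq_nonneg ((u y t - u x t) - (u y (t-1) - u x (t-1))))]
        have px : -((u y t - u x t)*(ψ x*(u x t - u x (t-1)))*(ψ y - ψ x))
            ≤ 1/2*ρ x y^2*(ψ x*(u x t - u x (t-1)))^2
              + χ x*((u y t - u x t)^2/(2*(R:ℝ)^2)) := by
          by_cases hx : ψ x = 0
          · have h0 : (0:ℝ) ≤ χ x*((u y t - u x t)^2/(2*(R:ℝ)^2)) :=
              mul_nonneg (hχ01 x).1 (div_nonneg (sq_nonneg _) (by positivity))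
            rw [hx]
            nlinarith [h0]
          · rw [hχψ x hx, one_mul]
            exact young_aux (R:ℝ) (ψ x*(u x t - u x (t-1))) (u y t - u x t)
              (ψ y - ψ x) (ρ x y^2) hRpos hd2'
        have py : -((u y t - u x t)*(ψ y*(u y t - u y (t-1)))*(ψ y - ψ x))
            ≤ 1/2*ρ x y^2*(ψ y*(u y t - u y (t-1)))^2
              + χ y*((u y t - u x t)^2/(2*(R:ℝ)^2)) := by
          by_cases hy : ψ y = 0
          · have h0 : (0:ℝ) ≤ χ y*((u y t - u x t)^2/(2*(R:ℝ)^2)) :=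
              mul_nonneg (hχ01 y).1 (div_nonneg (sq_nonneg _) (by positivity))
            rw [hy]
            nlinarith [h0]
          · rw [hχψ y hy, one_mul]
            exact young_aux (R:ℝ) (ψ y*(u y t - u y (t-1))) (u y t - u x t)
              (ψ y - ψ x) (ρ x y^2) hRpos hd2'
        linarith [p0, px, py]
      -- sum the per-pair estimate and split
      have hsum1 : 2 * ∑ x ∈ S, ∑ y ∈ S, w x y * (ψ x^2 * (u x t - u x (t-1)) * (u y t - u x t))
          ≤ ∑ x ∈ S, ∑ y ∈ S, w x y *
              (1/2*(ψ x*ψ y*((u y (t-1) - u x (t-1))^2 - (u y t - u x t)^2))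
                + 1/2*ρ x y^2*(ψ x^2*(u x t - u x (t-1))^2)
                + 1/2*ρ x y^2*(ψ y^2*(u y t - u y (t-1))^2)
                + (χ x + χ y)*((u y t - u x t)^2/(2*(R:ℝ)^2))) := by
        rw [← hT]
        apply Finset.sum_le_sum
        intro x hx
        apply Finset.sum_le_sum
        intro y hy
        exact hpair x hx y hy
      have hsplit : ∑ x ∈ S, ∑ y ∈ S, w x y *
              (1/2*(ψ x*ψ y*((u y (t-1) - u x (t-1))^2 - (u y t - u x t)^2))
                + 1/2*ρ x y^2*(ψ x^2*(u x t - u x (t-1))^2)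
                + 1/2*ρ x y^2*(ψ y^2*(u y t - u y (t-1))^2)
                + (χ x + χ y)*((u y t - u x t)^2/(2*(R:ℝ)^2)))
          = (∑ x ∈ S, ∑ y ∈ S, w x y * (1/2*(ψ x*ψ y*((u y (t-1) - u x (t-1))^2 - (u y t - u x t)^2))))
            + (∑ x ∈ S, ∑ y ∈ S, w x y * (1/2*ρ x y^2*(ψ x^2*(u x t - u x (t-1))^2)))
            + (∑ x ∈ S, ∑ y ∈ S, w x y * (1/2*ρ x y^2*(ψ y^2*(u y t - u y (t-1))^2)))
            + (∑ x ∈ S, ∑ y ∈ S, w x y * ((χ x + χ y)*((u y t - u x t)^2/(2*(R:ℝ)^2)))) := by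
        have e : ∀ x y : V, w x y *
              (1/2*(ψ x*ψ y*((u y (t-1) - u x (t-1))^2 - (u y t - u x t)^2))
                + 1/2*ρ x y^2*(ψ x^2*(u x t - u x (t-1))^2)
                + 1/2*ρ x y^2*(ψ y^2*(u y t - u y (t-1))^2)
                + (χ x + χ y)*((u y t - u x t)^2/(2*(R:ℝ)^2)))
            = w x y * (1/2*(ψ x*ψ y*((u y (t-1) - u x (t-1))^2 - (u y t - u x t)^2)))
              + w x y * (1/2*ρ x y^2*(ψ x^2*(u x t - u x (t-1))^2))
              + w x y * (1/2*ρ x y^2*(ψ y^2*(u y t - u y (t-1))^2))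
              + w x y * ((χ x + χ y)*((u y t - u x t)^2/(2*(R:ℝ)^2))) := by
          intro x y; ring
        rw [Finset.sum_congr rfl (fun x _ => Finset.sum_congr rfl (fun y _ => e x y))]
        simp only [Finset.sum_add_distrib]
      -- A1 : telescoping part
      have hA1 : ∑ x ∈ S, ∑ y ∈ S, w x y * (1/2*(ψ x*ψ y*((u y (t-1) - u x (t-1))^2 - (u y t - u x t)^2)))
          = 1/2 * H (t-1) - 1/2 * H t := by
        have e : ∀ x y : V, w x y * (1/2*(ψ x*ψ y*((u y (t-1) - u x (t-1))^2 - (u y t - u x t)^2)))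
            = 1/2 * (w x y * (ψ x * ψ y * (u y (t-1) - u x (t-1))^2))
              - 1/2 * (w x y * (ψ x * ψ y * (u y t - u x t)^2)) := by
          intro x y; ring
        rw [Finset.sum_congr rfl (fun x _ => Finset.sum_congr rfl (fun y _ => e x y))]
        simp only [Finset.sum_sub_distrib, ← Finset.mul_sum]
        rw [hHdef, hHdef]
      -- A2 bound
      have hA2gen : ∀ (D : V → ℝ), ∑ x ∈ S, ∑ y ∈ S, w x y * (1/2*ρ x y^2*(ψ x^2*(D x)^2))
          ≤ 1/2 * ∑ x ∈ S, ψ x^2*(D x)^2*m x := by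
        intro D
        have hone : ∀ x : V, ∑ y ∈ S, w x y * (1/2*ρ x y^2*(ψ x^2*(D x)^2))
            ≤ 1/2 * (ψ x^2*(D x)^2*m x) := by
          intro x
          have h1 : ∑ y ∈ S, w x y * (1/2*ρ x y^2*(ψ x^2*(D x)^2))
              = (1/2*(ψ x^2*(D x)^2)) * ∑ y ∈ S, w x y * ρ x y^2 := by
            rw [Finset.mul_sum]
            apply Finset.sum_congr rfl; intro y _; ring
          rw [h1]
          calc (1/2*(ψ x^2*(D x)^2)) * ∑ y ∈ S, w x y * ρ x y^2
              ≤ (1/2*(ψ x^2*(D x)^2)) * m x := by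
                apply mul_le_mul_of_nonneg_left (hmass x S) (by positivity)
            _ = 1/2 * (ψ x^2*(D x)^2*m x) := by ring
        calc ∑ x ∈ S, ∑ y ∈ S, w x y * (1/2*ρ x y^2*(ψ x^2*(D x)^2))
            ≤ ∑ x ∈ S, 1/2 * (ψ x^2*(D x)^2*m x) := Finset.sum_le_sum (fun x _ => hone x)
          _ = 1/2 * ∑ x ∈ S, ψ x^2*(D x)^2*m x := by rw [Finset.mul_sum]
      have hA2 : ∑ x ∈ S, ∑ y ∈ S, w x y * (1/2*ρ x y^2*(ψ x^2*(u x t - u x (t-1))^2))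
          ≤ 1/2 * ∑ x ∈ S, ψ x^2*(u x t - u x (t-1))^2*m x := by
        have := hA2gen (fun x => u x t - u x (t-1))
        simpa using this
      have hA3 : ∑ x ∈ S, ∑ y ∈ S, w x y * (1/2*ρ x y^2*(ψ y^2*(u y t - u y (t-1))^2))
          ≤ 1/2 * ∑ x ∈ S, ψ x^2*(u x t - u x (t-1))^2*m x := by
        have hsw : ∑ x ∈ S, ∑ y ∈ S, w x y * (1/2*ρ x y^2*(ψ y^2*(u y t - u y (t-1))^2))
            = ∑ x ∈ S, ∑ y ∈ S, w x y * (1/2*ρ x y^2*(ψ x^2*(u x t - u x (t-1))^2)) := by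
          rw [hswap (fun x y => 1/2*ρ x y^2*(ψ y^2*(u y t - u y (t-1))^2))]
          apply Finset.sum_congr rfl; intro x _
          apply Finset.sum_congr rfl; intro y _
          rw [hρ_symm y x]
        rw [hsw]
        exact hA2
      -- A4 bound
      have hA4 : ∑ x ∈ S, ∑ y ∈ S, w x y * ((χ x + χ y)*((u y t - u x t)^2/(2*(R:ℝ)^2)))
          ≤ (1/(R:ℝ)^2) * ∑ x ∈ B2, Em x t := by
        have hsplit4 : ∑ x ∈ S, ∑ y ∈ S, w x y * ((χ x + χ y)*((u y t - u x t)^2/(2*(R:ℝ)^2)))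
            = (∑ x ∈ S, ∑ y ∈ S, w x y * (χ x*((u y t - u x t)^2/(2*(R:ℝ)^2))))
              + (∑ x ∈ S, ∑ y ∈ S, w x y * (χ y*((u y t - u x t)^2/(2*(R:ℝ)^2)))) := by
          have e : ∀ x y : V, w x y * ((χ x + χ y)*((u y t - u x t)^2/(2*(R:ℝ)^2)))
              = w x y * (χ x*((u y t - u x t)^2/(2*(R:ℝ)^2)))
                + w x y * (χ y*((u y t - u x t)^2/(2*(R:ℝ)^2))) := by
            intro x y; ring
          rw [Finset.sum_congr rfl (fun x _ => Finset.sum_congr rfl (fun y _ => e x y))]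
          simp only [Finset.sum_add_distrib]
        have hsw4 : ∑ x ∈ S, ∑ y ∈ S, w x y * (χ y*((u y t - u x t)^2/(2*(R:ℝ)^2)))
            = ∑ x ∈ S, ∑ y ∈ S, w x y * (χ x*((u y t - u x t)^2/(2*(R:ℝ)^2))) := by
          rw [hswap (fun x y => χ y*((u y t - u x t)^2/(2*(R:ℝ)^2)))]
          apply Finset.sum_congr rfl; intro x _
          apply Finset.sum_congr rfl; intro y _
          ring_nf
        have hone4 : ∀ x : V, ∑ y ∈ S, w x y * (χ x*((u y t - u x t)^2/(2*(R:ℝ)^2)))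
            ≤ (1/(2*(R:ℝ)^2)) * (χ x * Em x t) := by
          intro x
          have h1 : ∑ y ∈ S, w x y * (χ x*((u y t - u x t)^2/(2*(R:ℝ)^2)))
              = (χ x/(2*(R:ℝ)^2)) * ∑ y ∈ S, w x y * (u y t - u x t)^2 := by
            rw [Finset.mul_sum]
            apply Finset.sum_congr rfl; intro y _; ring
          rw [h1]
          have h2 : ∑ y ∈ S, w x y * (u y t - u x t)^2 ≤ Em x t :=
            hsum_le x S (fun y => (u y t - u x t)^2) (fun y => sq_nonneg _)
          have h3 : (0:ℝ) ≤ χ x/(2*(R:ℝ)^2) :=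
            div_nonneg (hχ01 x).1 (by positivity)
          calc (χ x/(2*(R:ℝ)^2)) * ∑ y ∈ S, w x y * (u y t - u x t)^2
              ≤ (χ x/(2*(R:ℝ)^2)) * Em x t := mul_le_mul_of_nonneg_left h2 h3
            _ = (1/(2*(R:ℝ)^2)) * (χ x * Em x t) := by ring
        have hxpart : ∑ x ∈ S, ∑ y ∈ S, w x y * (χ x*((u y t - u x t)^2/(2*(R:ℝ)^2)))
            ≤ (1/(2*(R:ℝ)^2)) * ∑ x ∈ B2, Em x t := by
          calc ∑ x ∈ S, ∑ y ∈ S, w x y * (χ x*((u y t - u x t)^2/(2*(R:ℝ)^2)))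
              ≤ ∑ x ∈ S, (1/(2*(R:ℝ)^2)) * (χ x * Em x t) :=
                Finset.sum_le_sum (fun x _ => hone4 x)
            _ = (1/(2*(R:ℝ)^2)) * ∑ x ∈ B2, Em x t := hχEm _ t (by positivity)
        calc ∑ x ∈ S, ∑ y ∈ S, w x y * ((χ x + χ y)*((u y t - u x t)^2/(2*(R:ℝ)^2)))
            = 2 * ∑ x ∈ S, ∑ y ∈ S, w x y * (χ x*((u y t - u x t)^2/(2*(R:ℝ)^2))) := by
              rw [hsplit4, hsw4]; ring
          _ ≤ 2 * ((1/(2*(R:ℝ)^2)) * ∑ x ∈ B2, Em x t) := by linarith [hxpart]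
          _ = (1/(R:ℝ)^2) * ∑ x ∈ B2, Em x t := by
              ring
      -- P = P2
      have hP2 : ∑ x ∈ S, ψ x^2 * (u x t - u x (t-1)) * ((u x t - u x (t-1)) * m x)
          = ∑ x ∈ S, ψ x^2 * (u x t - u x (t-1))^2 * m x := by
        apply Finset.sum_congr rfl; intro x _; ring
      rw [hP2] at hPQ
      rw [hsplit] at hsum1
      linarith [hsum1, hA1, hA2, hA3, hA4, hPQ]
    -- time summation and telescope
    have hEmsum_nn : ∀ τ : ℤ, 0 ≤ ∑ x ∈ B2, Em x τ := by
      intro τ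
      exact Finset.sum_nonneg (fun x _ => hEm_nonneg x τ)
    calc ∑ t ∈ Finset.Icc t₂ 0, ∑ x ∈ S, ψ x^2 * (u x t - u x (t-1))^2 * m x
        ≤ ∑ t ∈ Finset.Icc t₂ 0,
            ((1/2*H (t-1) - 1/2*H t) + (1/(R:ℝ)^2) * ∑ x ∈ B2, Em x t) := by
          apply Finset.sum_le_sum
          intro t ht
          exact stepB t (Finset.mem_Icc.1 ht).2
      _ = (∑ t ∈ Finset.Icc t₂ 0, (1/2*H (t-1) - 1/2*H t))
          + (1/(R:ℝ)^2) * ∑ t ∈ Finset.Icc t₂ 0, ∑ x ∈ B2, Em x t := by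
          rw [Finset.sum_add_distrib, Finset.mul_sum]
      _ ≤ (∑ x ∈ B2, Em x (t₂-1))
          + (1/(R:ℝ)^2) * ∑ t ∈ Finset.Icc t₂ 0, ∑ x ∈ B2, Em x t := by
          have heq : ∀ t : ℤ, (1/2*H (t-1) - 1/2*H t)
              = (fun τ => 1/2 * H τ) (t-1) - (fun τ => 1/2 * H τ) t := by
            intro t; rfl
          rw [Finset.sum_congr rfl (fun t _ => heq t)]
          rw [telescope (fun τ => 1/2 * H τ) t₂ ht₂]
          have h1 := hHnn 0
          have h2 := hHnn (t₂-1)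
          have h3 := hHEm (t₂-1)
          linarith
  -- master quantity
  set X : ℝ := ∑ t ∈ Finset.Icc (-(9 * (R : ℤ)) ^ 2) 0, ∑ x ∈ S, (u x t)^2 * m x with hXdef
  have hinn_nn : ∀ t : ℤ, 0 ≤ ∑ x ∈ S, (u x t)^2 * m x := by
    intro t
    apply Finset.sum_nonneg
    intro x _
    exact mul_nonneg (sq_nonneg _) (hm x).le
  have hXnn : 0 ≤ X := Finset.sum_nonneg (fun t _ => hinn_nn t)
  have hsubX : ∀ a b : ℤ, -(9 * (R : ℤ)) ^ 2 ≤ a → b ≤ 0 →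
      ∑ t ∈ Finset.Icc a b, ∑ x ∈ S, (u x t)^2 * m x ≤ X := by
    intro a b ha hb
    apply Finset.sum_le_sum_of_subset_of_nonneg (Finset.Icc_subset_Icc ha hb)
    intro t _ _
    exact hinn_nn t
  have hRZ : (1:ℤ) ≤ (R:ℤ) := by exact_mod_cast hR
  have hRZ2 : (1:ℤ) ≤ (R:ℤ)^2 := by nlinarith
  have hR2pos : (0:ℝ) < (R:ℝ)^2 := by positivity
  -- cardinality of the averaging window, as a real number
  have hcard : ∀ j : ℤ, ((Finset.Icc (-((j+1)*(R:ℤ)^2)) (-(j*(R:ℤ)^2))).card : ℝ)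
      = (R:ℝ)^2 + 1 := by
    intro j
    rw [Int.card_Icc]
    have h1 : -(j*(R:ℤ)^2) + 1 - -((j+1)*(R:ℤ)^2) = (R:ℤ)^2 + 1 := by ring
    rw [h1]
    calc ((((R:ℤ)^2 + 1).toNat : ℕ) : ℝ) = ((((R:ℤ)^2 + 1).toNat : ℤ) : ℝ) := by push_cast; ring
      _ = (((R:ℤ)^2 + 1 : ℤ) : ℝ) := by
          rw [Int.toNat_of_nonneg (by positivity : (0:ℤ) ≤ (R:ℤ)^2 + 1)]
      _ = (R:ℝ)^2 + 1 := by push_cast; ring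
  -- generic averaged spatial Caccioppoli
  have appGen : ∀ φ : V → ℝ, (∀ x, 0 ≤ φ x) → (∀ x, φ x ≤ 1) →
      (∀ x, φ x ≠ 0 → ρ x x₀ ≤ 4*(R:ℝ)) → (∀ x y, |φ x - φ y| ≤ ρ x y / (R:ℝ)) →
      ∀ j : ℤ, 1 ≤ j → j ≤ 3 →
      (R:ℝ)^2 * (∑ t ∈ Finset.Icc (-(j*(R:ℤ)^2)) 0, ∑ x ∈ S, φ x^2 * Em x t) ≤ 20 * X := by
    intro φ hφ0 hφ1 hφsupp hφlip j hj1 hj3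
    have hEnn : ∀ (a b : ℤ), 0 ≤ ∑ t ∈ Finset.Icc a b, ∑ x ∈ S, φ x^2 * Em x t := by
      intro a b
      apply Finset.sum_nonneg; intro t _
      apply Finset.sum_nonneg; intro x _
      exact mul_nonneg (sq_nonneg _) (hEm_nonneg x t)
    have hjR : 0 ≤ j*(R:ℤ)^2 := by positivity
    have hstep : ∀ t₁ ∈ Finset.Icc (-((j+1)*(R:ℤ)^2)) (-(j*(R:ℤ)^2)),
        ∑ t ∈ Finset.Icc (-(j*(R:ℤ)^2)) 0, ∑ x ∈ S, φ x^2 * Em x t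
          ≤ 4 * (∑ x ∈ S, (u x (t₁-1))^2 * m x) + (8/(R:ℝ)^2) * X := by
      intro t₁ ht₁
      rw [Finset.mem_Icc] at ht₁
      have ht₁0 : t₁ ≤ 0 := by linarith [hjR, ht₁.2]
      have h1 : ∑ t ∈ Finset.Icc (-(j*(R:ℤ)^2)) 0, ∑ x ∈ S, φ x^2 * Em x t
          ≤ ∑ t ∈ Finset.Icc t₁ 0, ∑ x ∈ S, φ x^2 * Em x t := by
        apply Finset.sum_le_sum_of_subset_of_nonneg (Finset.Icc_subset_Icc ht₁.2 le_rfl)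
        intro t _ _
        apply Finset.sum_nonneg; intro x _
        exact mul_nonneg (sq_nonneg _) (hEm_nonneg x t)
      have h2 := lemA φ hφ0 hφ1 hφsupp hφlip t₁ ht₁0
      have h3 : ∑ x ∈ S, φ x^2 * (u x (t₁-1))^2 * m x ≤ ∑ x ∈ S, (u x (t₁-1))^2 * m x := by
        apply Finset.sum_le_sum
        intro x _
        have hφx : φ x^2 ≤ 1 := by nlinarith [hφ0 x, hφ1 x]
        nlinarith [mul_nonneg (sq_nonneg (u x (t₁-1))) (hm x).le]
      have h4 : ∑ t ∈ Finset.Icc t₁ 0, ∑ x ∈ S, (u x t)^2 * m x ≤ X := by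
        apply hsubX
        · nlinarith [ht₁.1, hRZ2]
        · exact le_refl 0
      have h5 : (8/(R:ℝ)^2) * (∑ t ∈ Finset.Icc t₁ 0, ∑ x ∈ S, (u x t)^2 * m x)
          ≤ (8/(R:ℝ)^2) * X := by
        apply mul_le_mul_of_nonneg_left h4 (by positivity)
      linarith [h1, h2, h3, h5]
    have havg := Finset.card_nsmul_le_sum
      (Finset.Icc (-((j+1)*(R:ℤ)^2)) (-(j*(R:ℤ)^2)))
      (fun t₁ => 4 * (∑ x ∈ S, (u x (t₁-1))^2 * m x) + (8/(R:ℝ)^2) * X)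
      (∑ t ∈ Finset.Icc (-(j*(R:ℤ)^2)) 0, ∑ x ∈ S, φ x^2 * Em x t)
      hstep
    rw [Finset.sum_add_distrib, Finset.sum_const, ← Finset.mul_sum] at havg
    have hshift : ∑ t₁ ∈ Finset.Icc (-((j+1)*(R:ℤ)^2)) (-(j*(R:ℤ)^2)),
        (∑ x ∈ S, (u x (t₁-1))^2 * m x)
        = ∑ t ∈ Finset.Icc (-((j+1)*(R:ℤ)^2)-1) (-(j*(R:ℤ)^2)-1), ∑ x ∈ S, (u x t)^2 * m x :=
      sum_shift (fun t => ∑ x ∈ S, (u x t)^2 * m x) _ _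
    have hsliceX : ∑ t ∈ Finset.Icc (-((j+1)*(R:ℤ)^2)-1) (-(j*(R:ℤ)^2)-1),
        ∑ x ∈ S, (u x t)^2 * m x ≤ X := by
      apply hsubX
      · nlinarith [hRZ2]
      · nlinarith [hjR]
    rw [hshift] at havg
    rw [nsmul_eq_mul, nsmul_eq_mul, hcard j] at havg
    -- havg : (R²+1) * E ≤ 4 * (time-shifted u² sum) + (R²+1) * ((8/R²) * X)
    have hone_le : (1:ℝ) ≤ (R:ℝ)^2 := by nlinarith [hRr]
    have h20 : ((R:ℝ)^2+1) * ((8/(R:ℝ)^2) * X) ≤ 16*X := by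
      have he : ((R:ℝ)^2+1) * (8/(R:ℝ)^2) = 8 + 8/(R:ℝ)^2 := by
        field_simp
      have hd : 8/(R:ℝ)^2 ≤ 8 := div_le_self (by norm_num) hone_le
      calc ((R:ℝ)^2+1) * ((8/(R:ℝ)^2) * X) = (((R:ℝ)^2+1) * (8/(R:ℝ)^2)) * X := by ring
        _ = (8 + 8/(R:ℝ)^2) * X := by rw [he]
        _ ≤ 16*X := by nlinarith [hXnn, hd]
    have hfinal : ((R:ℝ)^2+1) * (∑ t ∈ Finset.Icc (-(j*(R:ℤ)^2)) 0, ∑ x ∈ S, φ x^2 * Em x t)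
        ≤ 20*X := by
      have h4s : 4 * (∑ t ∈ Finset.Icc (-((j+1)*(R:ℤ)^2)-1) (-(j*(R:ℤ)^2)-1),
          ∑ x ∈ S, (u x t)^2 * m x) ≤ 4 * X := by linarith [hsliceX]
      linarith [havg, h4s, h20]
    nlinarith [hfinal, hEnn (-(j*(R:ℤ)^2)) 0]
  -- concrete cutoffs
  obtain ⟨φ₁, hφ₁0, hφ₁1, hφ₁one, hφ₁supp, hφ₁lip⟩ := hcut 1 (by norm_num)
  obtain ⟨φ₂, hφ₂0, hφ₂1, hφ₂one, hφ₂supp, hφ₂lip⟩ := hcut 2 (by norm_num)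
  have hφ₁supp4 : ∀ x, φ₁ x ≠ 0 → ρ x x₀ ≤ 4*(R:ℝ) := by
    intro x hx; linarith [hφ₁supp x hx]
  have hφ₂supp4 : ∀ x, φ₂ x ≠ 0 → ρ x x₀ ≤ 4*(R:ℝ) := by
    intro x hx; linarith [hφ₂supp x hx]
  have hφ₁supp2 : ∀ x, φ₁ x ≠ 0 → ρ x x₀ ≤ 2*(R:ℝ) := by
    intro x hx; linarith [hφ₁supp x hx]
  -- the Γ-part: App1
  have h1t : ∀ t : ℤ, ∑ x ∈ (hball x₀ (R:ℝ)).toFinset, Em x t ≤ ∑ x ∈ S, φ₁ x^2 * Em x t := by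
    intro t
    have e : ∑ x ∈ (hball x₀ (R:ℝ)).toFinset, Em x t
        = ∑ x ∈ (hball x₀ (R:ℝ)).toFinset, φ₁ x^2 * Em x t := by
      apply Finset.sum_congr rfl
      intro x hx
      have hx1 : ρ x x₀ ≤ 1*(R:ℝ) := by
        have := (hmemB (R:ℝ) x).1 hx
        linarith
      rw [hφ₁one x hx1]
      norm_num
    rw [e]
    apply Finset.sum_le_sum_of_subset_of_nonneg (hBmono (R:ℝ) (9*(R:ℝ)) (by linarith))
    intro x _ _
    exact mul_nonneg (sq_nonneg _) (hEm_nonneg x t)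
  have hApp1 : (R:ℝ)^2 * (∑ t ∈ Finset.Icc (-(R:ℤ)^2) 0,
      ∑ x ∈ (hball x₀ (R:ℝ)).toFinset, Em x t) ≤ 20 * X := by
    have h := appGen φ₁ hφ₁0 hφ₁1 hφ₁supp4 hφ₁lip 1 le_rfl (by norm_num)
    have hIcc1 : Finset.Icc (-(1*(R:ℤ)^2)) 0 = Finset.Icc (-(R:ℤ)^2) 0 := by norm_num
    rw [hIcc1] at h
    have h2 : ∑ t ∈ Finset.Icc (-(R:ℤ)^2) 0, ∑ x ∈ (hball x₀ (R:ℝ)).toFinset, Em x t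
        ≤ ∑ t ∈ Finset.Icc (-(R:ℤ)^2) 0, ∑ x ∈ S, φ₁ x^2 * Em x t :=
      Finset.sum_le_sum (fun t _ => h1t t)
    nlinarith [mul_le_mul_of_nonneg_left h2 (le_of_lt hR2pos)]
  -- App2 : energy on B2 at scale 3R²
  have h2t : ∀ t : ℤ, ∑ x ∈ B2, Em x t ≤ ∑ x ∈ S, φ₂ x^2 * Em x t := by
    intro t
    have e : ∑ x ∈ B2, Em x t = ∑ x ∈ B2, φ₂ x^2 * Em x t := by
      apply Finset.sum_congr rfl
      intro x hx
      have hx1 : ρ x x₀ ≤ 2*(R:ℝ) := (hmemB (2*(R:ℝ)) x).1 hx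
      rw [hφ₂one x hx1]
      norm_num
    rw [e]
    have hB2S : B2 ⊆ S := hBmono (2*(R:ℝ)) (9*(R:ℝ)) (by linarith)
    apply Finset.sum_le_sum_of_subset_of_nonneg hB2S
    intro x _ _
    exact mul_nonneg (sq_nonneg _) (hEm_nonneg x t)
  have hEWnn : 0 ≤ ∑ t ∈ Finset.Icc (-(3*(R:ℤ)^2)) 0, ∑ x ∈ B2, Em x t := by
    apply Finset.sum_nonneg; intro t _
    exact Finset.sum_nonneg (fun x _ => hEm_nonneg x t)
  have hApp2 : (R:ℝ)^2 * (∑ t ∈ Finset.Icc (-(3*(R:ℤ)^2)) 0, ∑ x ∈ B2, Em x t) ≤ 20 * X := by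
    have h := appGen φ₂ hφ₂0 hφ₂1 hφ₂supp4 hφ₂lip 3 (by norm_num) le_rfl
    have h2 : ∑ t ∈ Finset.Icc (-(3*(R:ℤ)^2)) 0, ∑ x ∈ B2, Em x t
        ≤ ∑ t ∈ Finset.Icc (-(3*(R:ℤ)^2)) 0, ∑ x ∈ S, φ₂ x^2 * Em x t :=
      Finset.sum_le_sum (fun t _ => h2t t)
    nlinarith [mul_le_mul_of_nonneg_left h2 (le_of_lt hR2pos)]
  -- App B : the time-derivative part
  have hDQnn : 0 ≤ ∑ t ∈ Finset.Icc (-(R:ℤ)^2) 0,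
      ∑ x ∈ (hball x₀ (R:ℝ)).toFinset, (u x t - u x (t - 1))^2 * m x := by
    apply Finset.sum_nonneg; intro t _
    apply Finset.sum_nonneg; intro x _
    exact mul_nonneg (sq_nonneg _) (hm x).le
  have hstepB : ∀ t₂ ∈ Finset.Icc (-((1+1)*(R:ℤ)^2)) (-(1*(R:ℤ)^2)),
      (∑ t ∈ Finset.Icc (-(R:ℤ)^2) 0,
        ∑ x ∈ (hball x₀ (R:ℝ)).toFinset, (u x t - u x (t - 1))^2 * m x)
      ≤ (∑ x ∈ B2, Em x (t₂-1))
        + (1/(R:ℝ)^2) * (∑ t ∈ Finset.Icc (-(3*(R:ℤ)^2)) 0, ∑ x ∈ B2, Em x t) := by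
    intro t₂ ht₂
    rw [Finset.mem_Icc] at ht₂
    have hRZ2' : (0:ℤ) ≤ (R:ℤ)^2 := by positivity
    have ht₂0 : t₂ ≤ 0 := by nlinarith [ht₂.2, hRZ2']
    have hd1 : ∑ t ∈ Finset.Icc (-(R:ℤ)^2) 0,
        ∑ x ∈ (hball x₀ (R:ℝ)).toFinset, (u x t - u x (t - 1))^2 * m x
        ≤ ∑ t ∈ Finset.Icc t₂ 0, ∑ x ∈ S, φ₁ x^2 * (u x t - u x (t-1))^2 * m x := by
      have hsub : Finset.Icc (-(R:ℤ)^2) 0 ⊆ Finset.Icc t₂ 0 := by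
        apply Finset.Icc_subset_Icc _ le_rfl
        nlinarith [ht₂.2]
      calc ∑ t ∈ Finset.Icc (-(R:ℤ)^2) 0,
          ∑ x ∈ (hball x₀ (R:ℝ)).toFinset, (u x t - u x (t - 1))^2 * m x
          ≤ ∑ t ∈ Finset.Icc (-(R:ℤ)^2) 0,
            ∑ x ∈ S, φ₁ x^2 * (u x t - u x (t-1))^2 * m x := by
            apply Finset.sum_le_sum
            intro t _
            have e : ∑ x ∈ (hball x₀ (R:ℝ)).toFinset, (u x t - u x (t - 1))^2 * m x
                = ∑ x ∈ (hball x₀ (R:ℝ)).toFinset, φ₁ x^2 * (u x t - u x (t-1))^2 * m x := by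
              apply Finset.sum_congr rfl
              intro x hx
              have hx1 : ρ x x₀ ≤ 1*(R:ℝ) := by
                have := (hmemB (R:ℝ) x).1 hx
                linarith
              rw [hφ₁one x hx1]
              norm_num
            rw [e]
            apply Finset.sum_le_sum_of_subset_of_nonneg (hBmono (R:ℝ) (9*(R:ℝ)) (by linarith))
            intro x _ _
            exact mul_nonneg (mul_nonneg (sq_nonneg _) (sq_nonneg _)) (hm x).le
        _ ≤ ∑ t ∈ Finset.Icc t₂ 0, ∑ x ∈ S, φ₁ x^2 * (u x t - u x (t-1))^2 * m x := by
            apply Finset.sum_le_sum_of_subset_of_nonneg hsub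
            intro t _ _
            apply Finset.sum_nonneg; intro x _
            exact mul_nonneg (mul_nonneg (sq_nonneg _) (sq_nonneg _)) (hm x).le
    have hd2 := lemB φ₁ hφ₁0 hφ₁1 hφ₁supp2 hφ₁lip t₂ ht₂0
    have hd3 : (1/(R:ℝ)^2) * (∑ t ∈ Finset.Icc t₂ 0, ∑ x ∈ B2, Em x t)
        ≤ (1/(R:ℝ)^2) * (∑ t ∈ Finset.Icc (-(3*(R:ℤ)^2)) 0, ∑ x ∈ B2, Em x t) := by
      apply mul_le_mul_of_nonneg_left _ (by positivity)
      apply Finset.sum_le_sum_of_subset_of_nonneg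
      · apply Finset.Icc_subset_Icc _ le_rfl
        nlinarith [ht₂.1, hRZ2']
      · intro t _ _
        exact Finset.sum_nonneg (fun x _ => hEm_nonneg x t)
    linarith [hd1, hd2, hd3]
  have havgB := Finset.card_nsmul_le_sum
    (Finset.Icc (-((1+1)*(R:ℤ)^2)) (-(1*(R:ℤ)^2)))
    (fun t₂ => (∑ x ∈ B2, Em x (t₂-1))
      + (1/(R:ℝ)^2) * (∑ t ∈ Finset.Icc (-(3*(R:ℤ)^2)) 0, ∑ x ∈ B2, Em x t))
    (∑ t ∈ Finset.Icc (-(R:ℤ)^2) 0,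
      ∑ x ∈ (hball x₀ (R:ℝ)).toFinset, (u x t - u x (t - 1))^2 * m x)
    hstepB
  rw [Finset.sum_add_distrib, Finset.sum_const] at havgB
  have hshiftB : ∑ t₂ ∈ Finset.Icc (-((1+1)*(R:ℤ)^2)) (-(1*(R:ℤ)^2)), (∑ x ∈ B2, Em x (t₂-1))
      = ∑ t ∈ Finset.Icc (-((1+1)*(R:ℤ)^2)-1) (-(1*(R:ℤ)^2)-1), ∑ x ∈ B2, Em x t :=
    sum_shift (fun t => ∑ x ∈ B2, Em x t) _ _
  have hsliceB : ∑ t ∈ Finset.Icc (-((1+1)*(R:ℤ)^2)-1) (-(1*(R:ℤ)^2)-1), ∑ x ∈ B2, Em x t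
      ≤ ∑ t ∈ Finset.Icc (-(3*(R:ℤ)^2)) 0, ∑ x ∈ B2, Em x t := by
    apply Finset.sum_le_sum_of_subset_of_nonneg
    · apply Finset.Icc_subset_Icc
      · nlinarith [hRZ2]
      · nlinarith [hRZ2]
    · intro t _ _
      exact Finset.sum_nonneg (fun x _ => hEm_nonneg x t)
  rw [hshiftB, nsmul_eq_mul, nsmul_eq_mul, hcard 1] at havgB
  have hone_le : (1:ℝ) ≤ (R:ℝ)^2 := by nlinarith [hRr]
  have hcstB : ((R:ℝ)^2+1) * ((1/(R:ℝ)^2)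
      * (∑ t ∈ Finset.Icc (-(3*(R:ℤ)^2)) 0, ∑ x ∈ B2, Em x t))
      ≤ 2 * (∑ t ∈ Finset.Icc (-(3*(R:ℤ)^2)) 0, ∑ x ∈ B2, Em x t) := by
    have he : ((R:ℝ)^2+1) * (1/(R:ℝ)^2) = 1 + 1/(R:ℝ)^2 := by
      field_simp
    have hd : 1/(R:ℝ)^2 ≤ 1 := by
      rw [div_le_one hR2pos]; exact hone_le
    calc ((R:ℝ)^2+1) * ((1/(R:ℝ)^2) * (∑ t ∈ Finset.Icc (-(3*(R:ℤ)^2)) 0, ∑ x ∈ B2, Em x t))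
        = (((R:ℝ)^2+1) * (1/(R:ℝ)^2)) * (∑ t ∈ Finset.Icc (-(3*(R:ℤ)^2)) 0, ∑ x ∈ B2, Em x t) := by
          ring
      _ = (1 + 1/(R:ℝ)^2) * (∑ t ∈ Finset.Icc (-(3*(R:ℤ)^2)) 0, ∑ x ∈ B2, Em x t) := by
          rw [he]
      _ ≤ 2 * (∑ t ∈ Finset.Icc (-(3*(R:ℤ)^2)) 0, ∑ x ∈ B2, Em x t) := by
          nlinarith [hEWnn, hd]
  have hAppB : (R:ℝ)^4 * (∑ t ∈ Finset.Icc (-(R:ℤ)^2) 0,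
      ∑ x ∈ (hball x₀ (R:ℝ)).toFinset, (u x t - u x (t - 1))^2 * m x) ≤ 60 * X := by
    have hB3 : ((R:ℝ)^2) * (∑ t ∈ Finset.Icc (-(R:ℤ)^2) 0,
        ∑ x ∈ (hball x₀ (R:ℝ)).toFinset, (u x t - u x (t - 1))^2 * m x)
        ≤ 3 * (∑ t ∈ Finset.Icc (-(3*(R:ℤ)^2)) 0, ∑ x ∈ B2, Em x t) := by
      have e1 : ((R:ℝ)^2+1) * (∑ t ∈ Finset.Icc (-(R:ℤ)^2) 0,
          ∑ x ∈ (hball x₀ (R:ℝ)).toFinset, (u x t - u x (t - 1))^2 * m x)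
          ≤ (∑ t ∈ Finset.Icc (-(3*(R:ℤ)^2)) 0, ∑ x ∈ B2, Em x t)
            + ((R:ℝ)^2+1) * ((1/(R:ℝ)^2)
              * (∑ t ∈ Finset.Icc (-(3*(R:ℤ)^2)) 0, ∑ x ∈ B2, Em x t)) :=
        le_trans havgB (add_le_add hsliceB le_rfl)
      have e2 : ((R:ℝ)^2+1) * (∑ t ∈ Finset.Icc (-(R:ℤ)^2) 0,
          ∑ x ∈ (hball x₀ (R:ℝ)).toFinset, (u x t - u x (t - 1))^2 * m x)
          ≤ (∑ t ∈ Finset.Icc (-(3*(R:ℤ)^2)) 0, ∑ x ∈ B2, Em x t)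
            + 2 * (∑ t ∈ Finset.Icc (-(3*(R:ℤ)^2)) 0, ∑ x ∈ B2, Em x t) :=
        le_trans e1 (add_le_add le_rfl hcstB)
      have e3 : (∑ t ∈ Finset.Icc (-(3*(R:ℤ)^2)) 0, ∑ x ∈ B2, Em x t)
            + 2 * (∑ t ∈ Finset.Icc (-(3*(R:ℤ)^2)) 0, ∑ x ∈ B2, Em x t)
          = 3 * (∑ t ∈ Finset.Icc (-(3*(R:ℤ)^2)) 0, ∑ x ∈ B2, Em x t) := by ring
      have e4 : ((R:ℝ)^2) * (∑ t ∈ Finset.Icc (-(R:ℤ)^2) 0,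
          ∑ x ∈ (hball x₀ (R:ℝ)).toFinset, (u x t - u x (t - 1))^2 * m x)
          ≤ ((R:ℝ)^2+1) * (∑ t ∈ Finset.Icc (-(R:ℤ)^2) 0,
          ∑ x ∈ (hball x₀ (R:ℝ)).toFinset, (u x t - u x (t - 1))^2 * m x) :=
        mul_le_mul_of_nonneg_right (by linarith) hDQnn
      exact le_trans e4 (le_trans e2 (le_of_eq e3))
    have := mul_le_mul_of_nonneg_left hB3 (le_of_lt hR2pos)
    nlinarith [this, hApp2, hR2pos]
  -- conversion of the statement's Γ expression
  have hconv : ∑ t ∈ Finset.Icc (-(R:ℤ)^2) 0,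
      ∑ x ∈ (hball x₀ (R:ℝ)).toFinset,
        ((1 / (2 * m x)) * ∑ᶠ y : V, w x y * (u y t - u x t) ^ 2) * m x
      = 1/2 * (∑ t ∈ Finset.Icc (-(R:ℤ)^2) 0,
          ∑ x ∈ (hball x₀ (R:ℝ)).toFinset, Em x t) := by
    simp only [Finset.mul_sum]
    apply Finset.sum_congr rfl; intro t _
    apply Finset.sum_congr rfl; intro x _
    have hfin : ∑ᶠ y : V, w x y * (u y t - u x t)^2
        = ∑ y ∈ (hw_fin x).toFinset, w x y * (u y t - u x t)^2 := by
      apply finsum_eq_sum_of_support_subset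
      intro y hy
      rw [Function.mem_support] at hy
      rw [Set.Finite.coe_toFinset]
      simp only [Set.mem_setOf_eq]
      intro h0
      exact hy (by rw [h0]; ring)
    have hEmx : ∑ y ∈ (hw_fin x).toFinset, w x y * (u y t - u x t)^2 = Em x t := by
      rw [hEmdef]
    rw [hfin, hEmx]
    have hmne : m x ≠ 0 := ne_of_gt (hm x)
    field_simp
  rw [hconv]
  linarith [hApp1, hAppB, hXnn]

/-- Discrete-time Caccioppoli inequality: there is a universal constant C such that for any
weighted graph with an intrinsic metric with finite balls and jump size s, any ancient solution
u of the discrete-time heat equation D_t u = Δu and any integer R ≥ s,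
R² ∑_{Q̃_R} Γ(u) + R⁴ ∑_{Q̃_R} (D_t u)² ≤ C ∑_{Q̃_{9R}} u². -/
theorem discrete_caccioppoli :
    ∃ C : ℝ, 0 < C ∧
    ∀ (V : Type) (w : V → V → ℝ) (m : V → ℝ) (ρ : V → V → ℝ) (x₀ : V) (s : ℝ),
      (∀ x y, w x y = w y x) → (∀ x y, 0 ≤ w x y) →
      (∀ x, {y | w x y ≠ 0}.Finite) → (∀ x, 0 < m x) →
      (∀ x y, ρ x y = ρ y x) → (∀ x y, 0 ≤ ρ x y) → (∀ x, ρ x x = 0) →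
      (∀ x y z, ρ x z ≤ ρ x y + ρ y z) →
      (∀ x, ∑ᶠ y : V, w x y * ρ x y ^ 2 ≤ m x) →
      ∀ hball : ∀ (x : V) (r : ℝ), {y | ρ y x ≤ r}.Finite,
      (∀ x y, w x y ≠ 0 → ρ x y ≤ s) →
      ∀ u : V → ℤ → ℝ,
        (∀ (x : V) (t : ℤ), t ≤ 0 →
          u x t - u x (t - 1) = (∑ᶠ y : V, w x y * (u y t - u x t)) / m x) →
      ∀ R : ℕ, s ≤ (R : ℝ) →
        (R : ℝ) ^ 2 * (∑ t ∈ Finset.Icc (-(R : ℤ) ^ 2) 0,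
            ∑ x ∈ (hball x₀ (R : ℝ)).toFinset,
              ((1 / (2 * m x)) * ∑ᶠ y : V, w x y * (u y t - u x t) ^ 2) * m x)
        + (R : ℝ) ^ 4 * (∑ t ∈ Finset.Icc (-(R : ℤ) ^ 2) 0,
            ∑ x ∈ (hball x₀ (R : ℝ)).toFinset, (u x t - u x (t - 1)) ^ 2 * m x)
        ≤ C * ∑ t ∈ Finset.Icc (-(9 * (R : ℤ)) ^ 2) 0,
            ∑ x ∈ (hball x₀ (9 * (R : ℝ))).toFinset, (u x t) ^ 2 * m x := by
  classical
  refine ⟨100, by norm_num, ?_⟩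
  intro V w m ρ x₀ s hw_symm hw_nonneg hw_fin hm hρ_symm hρ_nonneg hρ_refl hρ_tri hρw
    hball hjump u hu R hsR
  rcases Nat.eq_zero_or_pos R with hR0 | hRpos
  · subst hR0
    have key : ∀ A B C : ℝ, 0 ≤ C →
        (((0:ℕ):ℝ)) ^ 2 * A + (((0:ℕ):ℝ)) ^ 4 * B ≤ 100 * C := by
      intro A B C hC
      norm_num
      linarith
    have hC : 0 ≤ ∑ t ∈ Finset.Icc (-(9 * ((0:ℕ) : ℤ)) ^ 2) 0,
        ∑ x ∈ (hball x₀ (9 * ((0:ℕ) : ℝ))).toFinset, (u x t) ^ 2 * m x :=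
      Finset.sum_nonneg (fun t _ => Finset.sum_nonneg
        (fun x _ => mul_nonneg (sq_nonneg _) (le_of_lt (hm x))))
    exact key _ _ _ hC
  · exact main_cacc w m ρ x₀ s hw_symm hw_nonneg hw_fin hm hρ_symm hρ_nonneg hρ_tri hρw
      hball hjump u hu R hsR hRpos
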